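/- Let k ≥ 3 be an integer, let G = (A ∪ B, E) be a bipartite graph in which every vertex has degree at most k+1, and let I_G and X_G be the associated personalized bi-valued instance and allocation. If an allocation X' Pareto-dominates X_G, then the total utility increase Σ_{i ∈ A∪B} (u_i(X'_i) − u_i((X_G)_i)) is at most |E|·ε, which is strictly less than 1/k; in particular, every individual agent's utility increase u_i(X'_i) − u_i((X_G)_i) is strictly less than 1/k. -/

import Mathlib

open Finset
open scoped Classical

noncomputable section

/-- Additive utility of a bundle: the sum of the values of the single goods in it. -/
def util {α β : Type*} [DecidableEq β] (u : α → β → ℝ) (i : α) (S : Finset β) : ℝ :=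
  ∑ g ∈ S, u i g

/-- `X` is an allocation: a partition of the set of goods into (possibly empty) bundles,
one per agent. -/
def IsAllocation {α β : Type*} [DecidableEq β] (X : α → Finset β) : Prop :=
  (∀ g : β, ∃ i, g ∈ X i) ∧ ∀ i j : α, i ≠ j → Disjoint (X i) (X j)

/-- `X'` Pareto-dominates `X` w.r.t. utilities `u`. -/
def ParetoDominates {α β : Type*} [DecidableEq β] (u : α → β → ℝ)
    (X' X : α → Finset β) : Prop :=
  (∀ i, util u i (X i) ≤ util u i (X' i)) ∧ ∃ j, util u j (X j) < util u j (X' j)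

variable {A B : Type*} [Fintype A] [Fintype B] [DecidableEq A] [DecidableEq B]

/-- The goods of the instance `I_G`: one good `g_e` for each edge `e ∈ E` of the bipartite
graph, plus `k+1` filler goods for each vertex `b ∈ B`. -/
abbrev RedGood (E : Finset (A × B)) (k : ℕ) : Type _ :=
  {e : A × B // e ∈ E} ⊕ (B × Fin (k + 1))

/-- The utilities of the instance `I_G`: agent `a ∈ A` values `g_e` at `1 + 1/k` if `a` is
an endpoint of `e` and at `1` otherwise, and values every filler good at `1`; agent `b ∈ B`
values `g_e` at `1 + (1+ε)/k` if `b` is an endpoint of `e` and at `1` otherwise, and values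
every filler good at `1`. -/
def redUtil (E : Finset (A × B)) (k : ℕ) (ε : ℝ) : (A ⊕ B) → RedGood E k → ℝ
  | Sum.inl a, Sum.inl e => if e.val.1 = a then 1 + 1 / (k : ℝ) else 1
  | Sum.inl _, Sum.inr _ => 1
  | Sum.inr b, Sum.inl e => if e.val.2 = b then 1 + (1 + ε) / (k : ℝ) else 1
  | Sum.inr _, Sum.inr _ => 1

/-- The allocation `X_G`: each agent `a ∈ A` gets the goods `g_e` for the edges `e`
incident to `a`, and each agent `b ∈ B` gets its own `k+1` filler goods. -/
def XG (E : Finset (A × B)) (k : ℕ) : (A ⊕ B) → Finset (RedGood E k)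
  | Sum.inl a =>
      Finset.univ.filter (fun g => ∃ e : {e : A × B // e ∈ E}, g = Sum.inl e ∧ e.val.1 = a)
  | Sum.inr b =>
      Finset.univ.filter (fun g => ∃ p : B × Fin (k + 1), g = Sum.inr p ∧ p.1 = b)

/-- `G = (A ∪ B, E)` contains a `k`-regular bipartite subgraph: a nonempty edge set
`E₁ ⊆ E` such that every vertex incident to an edge of `E₁` is incident to exactly `k`
edges of `E₁`. -/
def HasKRegularSubgraph (E : Finset (A × B)) (k : ℕ) : Prop :=
  ∃ E₁ : Finset (A × B), E₁ ⊆ E ∧ E₁.Nonempty ∧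
    (∀ a : A, (E₁.filter (fun e => e.1 = a)).Nonempty →
      (E₁.filter (fun e => e.1 = a)).card = k) ∧
    (∀ b : B, (E₁.filter (fun e => e.2 = b)).Nonempty →
      (E₁.filter (fun e => e.2 = b)).card = k)

/-- If an allocation `X'` Pareto-dominates `X_G`, then the total utility
increase is at most `|E|·ε`, which is strictly less than `1/k`; in particular every
individual agent's utility increase is strictly less than `1/k`. -/
theorem paretoImprovement_small_gain
    (k : ℕ) (hk : 3 ≤ k) (E : Finset (A × B)) (ε : ℝ)
    (hdegA : ∀ a : A, (E.filter (fun e => e.1 = a)).card ≤ k + 1)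
    (hdegB : ∀ b : B, (E.filter (fun e => e.2 = b)).card ≤ k + 1)
    (hε0 : 0 < ε)
    (hε1 : ε < 1 / (k * (E.card + (k + 1) * Fintype.card B)))
    (X' : (A ⊕ B) → Finset (RedGood E k)) (hX' : IsAllocation X')
    (hdom : ParetoDominates (redUtil E k ε) X' (XG E k)) :
    (∑ i : A ⊕ B,
        (util (redUtil E k ε) i (X' i) - util (redUtil E k ε) i (XG E k i))) ≤
          (E.card : ℝ) * ε ∧
      (E.card : ℝ) * ε < 1 / (k : ℝ) ∧
      ∀ i : A ⊕ B,
        util (redUtil E k ε) i (X' i) - util (redUtil E k ε) i (XG E k i) < 1 / (k : ℝ) := by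
  classical
  set u := redUtil E k ε with hu
  have hk0 : (0:ℝ) < k := by
    have : 0 < k := by omega
    exact_mod_cast this
  have hk1 : (1:ℝ) ≤ k := by
    have : 1 ≤ k := by omega
    exact_mod_cast this
  obtain ⟨hcov, hdisj⟩ := hX'
  set f' : RedGood E k → (A ⊕ B) := fun g => Classical.choose (hcov g) with hf'
  have hf'mem : ∀ g, g ∈ X' (f' g) := fun g => Classical.choose_spec (hcov g)
  have hfib : ∀ i, X' i = univ.filter (fun g => f' g = i) := by
    intro i; ext g
    simp only [mem_filter, mem_univ, true_and]
    constructor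
    · intro hg
      by_contra hne
      exact (Finset.disjoint_left.mp (hdisj _ _ hne) (hf'mem g)) hg
    · rintro rfl; exact hf'mem g
  have hsum' : ∑ i, util u i (X' i) = ∑ g : RedGood E k, u (f' g) g := by
    rw [← Finset.sum_fiberwise univ f' (fun g => u (f' g) g)]
    refine Finset.sum_congr rfl fun i _ => ?_
    rw [hfib i]
    unfold util
    refine Finset.sum_congr rfl fun g hg => ?_
    rw [(Finset.mem_filter.mp hg).2]
  set f0 : RedGood E k → (A ⊕ B) := fun g =>
    match g with
    | Sum.inl e => Sum.inl e.val.1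
    | Sum.inr p => Sum.inr p.1
    with hf0
  have hfib0 : ∀ i, XG E k i = univ.filter (fun g => f0 g = i) := by
    rintro (a | b) <;> ext g <;> rcases g with e | p <;>
      simp [XG, f0, Prod.ext_iff]
  have hsum0 : ∑ i, util u i (XG E k i) = ∑ g : RedGood E k, u (f0 g) g := by
    rw [← Finset.sum_fiberwise univ f0 (fun g => u (f0 g) g)]
    refine Finset.sum_congr rfl fun i _ => ?_
    rw [hfib0 i]
    unfold util
    refine Finset.sum_congr rfl fun g hg => ?_
    rw [(Finset.mem_filter.mp hg).2]
  set Mfun : RedGood E k → ℝ := Sum.elim (fun _ => 1 + (1 + ε) / (k:ℝ)) (fun _ => 1)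
    with hMfun
  set m0fun : RedGood E k → ℝ := Sum.elim (fun _ => 1 + 1 / (k:ℝ)) (fun _ => 1)
    with hm0fun
  have hval0 : ∀ g : RedGood E k, u (f0 g) g = m0fun g := by
    rintro (e | p) <;> simp [hu, redUtil, f0, m0fun]
  have hub : ∀ (i : A ⊕ B) (g : RedGood E k), u i g ≤ Mfun g := by
    have hpos : (0:ℝ) < (1 + ε) / k := by positivity
    have h1k : 1 / (k:ℝ) ≤ (1 + ε) / k := by
      gcongr
      linarith
    rintro (a | b) (e | p) <;> simp only [hu, redUtil, Mfun, Sum.elim_inl, Sum.elim_inr] <;>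
      try split_ifs <;> intros
    all_goals linarith
  have hdiffsum : ∑ g : RedGood E k, (Mfun g - m0fun g) = (E.card : ℝ) * (ε / k) := by
    rw [Fintype.sum_sum_type]
    simp only [Mfun, m0fun, Sum.elim_inl, Sum.elim_inr, sub_self, Finset.sum_const,
      Finset.sum_const_zero, add_zero, Finset.card_univ, Fintype.card_coe, nsmul_eq_mul]
    ring
  have htot : (∑ i : A ⊕ B, (util u i (X' i) - util u i (XG E k i)))
      ≤ (E.card : ℝ) * (ε / k) := by
    rw [Finset.sum_sub_distrib, hsum', hsum0, ← hdiffsum]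
    have h0 : ∑ g : RedGood E k, u (f0 g) g = ∑ g : RedGood E k, m0fun g :=
      Finset.sum_congr rfl fun g _ => hval0 g
    rw [h0, ← Finset.sum_sub_distrib]
    exact Finset.sum_le_sum fun g _ => by
      have := hub (f' g) g; linarith
  have hεk : (E.card : ℝ) * (ε / k) ≤ (E.card : ℝ) * ε := by
    have h1 : ε / k ≤ ε := by
      rw [div_le_iff₀ hk0]
      nlinarith
    have : (0:ℝ) ≤ (E.card : ℝ) := Nat.cast_nonneg _
    nlinarith
  have part1 : (∑ i : A ⊕ B, (util u i (X' i) - util u i (XG E k i)))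
      ≤ (E.card : ℝ) * ε := le_trans htot hεk
  have part2 : (E.card : ℝ) * ε < 1 / (k : ℝ) := by
    rcases Nat.eq_zero_or_pos E.card with h0 | hpos
    · rw [h0]
      simp only [Nat.cast_zero, zero_mul]
      positivity
    · have hc1 : (1:ℝ) ≤ (E.card : ℝ) := by exact_mod_cast hpos
      have hB : (0:ℝ) ≤ ((k:ℝ) + 1) * (Fintype.card B : ℝ) := by positivity
      have hle : (E.card : ℝ) ≤ (E.card : ℝ) + ((k:ℝ) + 1) * (Fintype.card B : ℝ) := by
        linarith
      have hmpos : (0:ℝ) < (k:ℝ) * ((E.card : ℝ) + ((k:ℝ) + 1) * (Fintype.card B : ℝ)) := by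
        nlinarith
      have h1 : ε * ((k:ℝ) * ((E.card : ℝ) + ((k:ℝ) + 1) * (Fintype.card B : ℝ))) < 1 := by
        have := hε1
        push_cast at this
        exact (lt_div_iff₀ hmpos).mp this
      rw [lt_div_iff₀ hk0]
      nlinarith [mul_nonneg (mul_nonneg hε0.le hk0.le)
        (sub_nonneg.mpr hle)]
  refine ⟨part1, part2, fun i => ?_⟩
  have hnn : ∀ j ∈ (univ : Finset (A ⊕ B)),
      0 ≤ util u j (X' j) - util u j (XG E k j) := fun j _ => by
    have := hdom.1 j; linarith
  have hsingle := Finset.single_le_sum hnn (Finset.mem_univ i)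
  calc util u i (X' i) - util u i (XG E k i)
      ≤ ∑ j : A ⊕ B, (util u j (X' j) - util u j (XG E k j)) := hsingle
    _ ≤ (E.card : ℝ) * ε := part1
    _ < 1 / (k : ℝ) := part2

end
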